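/- Mean-zero property of the efficient influence function of the random replacement component parameter: E_P[D_P] = 0, where D_P = (1{A=a'}/P(A=a))·(π_P(a|X)/π_P(a'|X))·(Y − μ_P(X)) + (1{A=a}/P(A=a))·(μ_P(X) − θ_P). -/

import Mathlib

open MeasureTheory ProbabilityTheory

lemma bdd_integrable {Ω : Type*} [MeasurableSpace Ω] (P : Measure Ω) [IsFiniteMeasure P]
    {f : Ω → ℝ} (hf : AEStronglyMeasurable f P) (C : ℝ) (h : ∀ ω, |f ω| ≤ C) :
    Integrable f P :=
  (integrable_const C).mono' hf (ae_of_all _ fun ω => by simpa using h ω)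

/-- Mean-zero property of the efficient influence function of the random replacement
component parameter: `E_P[D_P] = 0`. -/
theorem eif_mean_zero_random_replacement
    {Ω 𝒳 : Type*} [MeasurableSpace Ω] [StandardBorelSpace Ω]
    [MeasurableSpace 𝒳] [StandardBorelSpace 𝒳]
    (P : Measure Ω) [IsProbabilityMeasure P]
    (m : ℕ) (hm : 1 ≤ m)
    (X : Ω → 𝒳) (A : Ω → Fin m) (Y : Ω → ℝ)
    (hX : Measurable X) (hA : Measurable A) (hY : Measurable Y)
    (hY01 : ∀ ω, 0 ≤ Y ω ∧ Y ω ≤ 1)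
    (a a' : Fin m) (ε : ℝ) (hε : 0 < ε) (hε1 : ε ≤ 1)
    (hPa : 0 < P {ω | A ω = a})
    -- propensity scores, for b ∈ {a, a'}
    (πP : Fin m → 𝒳 → ℝ)
    (hπPmeas : ∀ b ∈ ({a, a'} : Set (Fin m)), Measurable (πP b))
    (hπPrange : ∀ b ∈ ({a, a'} : Set (Fin m)), ∀ x, ε ≤ πP b x ∧ πP b x ≤ 1)
    (hπP : ∀ b ∈ ({a, a'} : Set (Fin m)), (fun ω => πP b (X ω)) =ᵐ[P]
      P[fun ω => (if A ω = b then (1 : ℝ) else 0) | MeasurableSpace.comap X inferInstance])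
    -- outcome regression
    (μP : 𝒳 → ℝ)
    (hμPmeas : Measurable μP) (hμPrange : ∀ x, 0 ≤ μP x ∧ μP x ≤ 1)
    (hμP : (fun ω => μP (X ω) * πP a' (X ω)) =ᵐ[P]
      P[fun ω => (if A ω = a' then (1 : ℝ) else 0) * Y ω | MeasurableSpace.comap X inferInstance])
    -- parameter
    (θP : ℝ)
    (hθP : θP = (∫ ω, μP (X ω) * (if A ω = a then (1 : ℝ) else 0) ∂P)
      / (P {ω | A ω = a}).toReal)
    -- efficient influence function at P
    (DP : Ω → ℝ)
    (hDP : ∀ ω, DP ω =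
      (if A ω = a' then (1 : ℝ) else 0) / (P {ω' | A ω' = a}).toReal
        * (πP a (X ω) / πP a' (X ω)) * (Y ω - μP (X ω))
      + (if A ω = a then (1 : ℝ) else 0) / (P {ω' | A ω' = a}).toReal * (μP (X ω) - θP)) :
    (∫ ω, DP ω ∂P) = 0 := by
  classical
  set c : ℝ := (P {ω | A ω = a}).toReal with hcdef
  have hc : 0 < c := ENNReal.toReal_pos hPa.ne' (measure_ne_top P _)
  -- measurability facts
  have hπa : Measurable (πP a) := hπPmeas a (by simp)
  have hπa' : Measurable (πP a') := hπPmeas a' (by simp)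
  have hπa'pos : ∀ x, 0 < πP a' x := fun x => lt_of_lt_of_le hε (hπPrange a' (by simp) x).1
  set f : Ω → ℝ := fun ω => πP a (X ω) / πP a' (X ω) with hfdef
  have hfmeas : Measurable f := (hπa.div hπa').comp hX
  have hfbd : ∀ ω, |f ω| ≤ 1 / ε := by
    intro ω
    have h1 : 0 ≤ πP a (X ω) := le_trans hε.le (hπPrange a (by simp) (X ω)).1
    have h2 : πP a (X ω) ≤ 1 := (hπPrange a (by simp) (X ω)).2
    have h3 : ε ≤ πP a' (X ω) := (hπPrange a' (by simp) (X ω)).1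
    rw [abs_of_nonneg (div_nonneg h1 (hπa'pos (X ω)).le)]
    exact div_le_div₀ zero_le_one h2 hε h3
  have hμXmeas : Measurable (fun ω => μP (X ω)) := hμPmeas.comp hX
  -- indicator functions
  set ia : Ω → ℝ := fun ω => if A ω = a then (1 : ℝ) else 0 with hiadef
  set ia' : Ω → ℝ := fun ω => if A ω = a' then (1 : ℝ) else 0 with hia'def
  have hiameas : Measurable ia := by
    apply Measurable.ite (hA (measurableSet_singleton a)) <;> measurability
  have hia'meas : Measurable ia' := by
    apply Measurable.ite (hA (measurableSet_singleton a')) <;> measurability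
  have hiabd : ∀ ω, |ia ω| ≤ 1 := by intro ω; simp only [hiadef]; split <;> norm_num
  have hia'bd : ∀ ω, |ia' ω| ≤ 1 := by intro ω; simp only [hia'def]; split <;> norm_num
  have hYbd : ∀ ω, |Y ω| ≤ 1 := fun ω => abs_le.mpr ⟨by linarith [(hY01 ω).1], (hY01 ω).2⟩
  have hμbd : ∀ ω, |μP (X ω)| ≤ 1 :=
    fun ω => abs_le.mpr ⟨by linarith [(hμPrange (X ω)).1], (hμPrange (X ω)).2⟩
  -- integrabilities
  have hint_ia'Y : Integrable (fun ω => ia' ω * Y ω) P :=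
    bdd_integrable P ((hia'meas.mul hY).aestronglyMeasurable) 1
      (fun ω => by rw [abs_mul]; exact mul_le_one₀ (hia'bd ω) (abs_nonneg _) (hYbd ω))
  have hint_ia'μ : Integrable (fun ω => μP (X ω) * ia' ω) P :=
    bdd_integrable P ((hμXmeas.mul hia'meas).aestronglyMeasurable) 1
      (fun ω => by rw [abs_mul]; exact mul_le_one₀ (hμbd ω) (abs_nonneg _) (hia'bd ω))
  have hint_g : Integrable (fun ω => ia' ω * Y ω - μP (X ω) * ia' ω) P :=
    hint_ia'Y.sub hint_ia'μ
  have hint_fg : Integrable (fun ω => f ω * (ia' ω * Y ω - μP (X ω) * ia' ω)) P := by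
    apply bdd_integrable P
      ((hfmeas.mul ((hia'meas.mul hY).sub (hμXmeas.mul hia'meas))).aestronglyMeasurable) (1/ε * 2)
    intro ω
    show |f ω * (ia' ω * Y ω - μP (X ω) * ia' ω)| ≤ 1/ε * 2
    rw [abs_mul]
    have h1 : |ia' ω * Y ω - μP (X ω) * ia' ω| ≤ 2 := by
      calc |ia' ω * Y ω - μP (X ω) * ia' ω| ≤ |ia' ω * Y ω| + |μP (X ω) * ia' ω| :=
            abs_sub _ _
        _ ≤ 2 := by
            rw [abs_mul, abs_mul]
            nlinarith [abs_nonneg (ia' ω), abs_nonneg (Y ω), abs_nonneg (μP (X ω)),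
              hia'bd ω, hYbd ω, hμbd ω]
    exact mul_le_mul (hfbd ω) h1 (abs_nonneg _) (by positivity)
  have hint_ia' : Integrable ia' P :=
    bdd_integrable P hia'meas.aestronglyMeasurable 1 hia'bd
  have hint_ia : Integrable ia P :=
    bdd_integrable P hiameas.aestronglyMeasurable 1 hiabd
  have hint_μia : Integrable (fun ω => μP (X ω) * ia ω) P :=
    bdd_integrable P ((hμXmeas.mul hiameas).aestronglyMeasurable) 1
      (fun ω => by rw [abs_mul]; exact mul_le_one₀ (hμbd ω) (abs_nonneg _) (hiabd ω))
  have hint_iaθ : Integrable (fun ω => ia ω * (μP (X ω) - θP)) P :=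
    bdd_integrable P ((hiameas.mul (hμXmeas.sub measurable_const)).aestronglyMeasurable)
      (1 * (1 + |θP|)) (fun ω => by
        rw [abs_mul]
        have h1 : |μP (X ω) - θP| ≤ 1 + |θP| := by
          calc |μP (X ω) - θP| ≤ |μP (X ω)| + |θP| := abs_sub _ _
            _ ≤ 1 + |θP| := by linarith [hμbd ω]
        exact mul_le_mul (hiabd ω) h1 (abs_nonneg _) (by norm_num))
  -- integral of indicator of A = a
  have hIia : (∫ ω, ia ω ∂P) = c := by
    have : ia = Set.indicator {ω | A ω = a} (fun _ => (1 : ℝ)) := by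
      funext ω; simp [hiadef, Set.indicator_apply]
    have hs : MeasurableSet {ω | A ω = a} := hA (measurableSet_singleton a)
    rw [this, integral_indicator_const (1:ℝ) hs]
    simp [hcdef]
    rfl
  -- second integral
  have hI2 : (∫ ω, ia ω * (μP (X ω) - θP) ∂P) = 0 := by
    have heq : (fun ω => ia ω * (μP (X ω) - θP))
        = fun ω => μP (X ω) * ia ω - θP * ia ω := by funext ω; ring
    rw [heq, integral_sub hint_μia (hint_ia.const_mul θP), integral_const_mul, hIia, hθP]
    have hE : (∫ ω, μP (X ω) * ia ω ∂P)
        = ∫ ω, μP (X ω) * (if A ω = a then (1:ℝ) else 0) ∂P := rfl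
    rw [hE]
    field_simp
    ring
  -- now the conditional-expectation part
  have hmX := hX.comap_le
  set mX : MeasurableSpace Ω := MeasurableSpace.comap X inferInstance with hmXdef
  have hXmX : @Measurable Ω 𝒳 mX _ X := Measurable.of_comap_le le_rfl
  have hfmX : StronglyMeasurable[mX] f :=
    Measurable.stronglyMeasurable ((hπa.div hπa').comp hXmX)
  have hμXmX : StronglyMeasurable[mX] (fun ω => μP (X ω)) :=
    Measurable.stronglyMeasurable (hμPmeas.comp hXmX)
  have hpull : P[fun ω => μP (X ω) * ia' ω | mX]
      =ᵐ[P] fun ω => μP (X ω) * (P[ia' | mX]) ω := by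
    have h := condExp_mul_of_stronglyMeasurable_left (μ := P) (m := mX) hμXmX hint_ia'μ hint_ia'
    filter_upwards [h] with ω hω
    exact hω
  have hcondg : P[fun ω => ia' ω * Y ω - μP (X ω) * ia' ω | mX] =ᵐ[P] 0 := by
    have hsub := condExp_sub (μ := P) (m := mX) hint_ia'Y hint_ia'μ
    have hπa'X := hπP a' (by simp)
    have hgfun : (fun ω => ia' ω * Y ω - μP (X ω) * ia' ω)
        = (fun ω => ia' ω * Y ω) - fun ω => μP (X ω) * ia' ω := rfl
    rw [hgfun]
    filter_upwards [hsub, hpull, hμP, hπa'X] with ω h1 h2 h3 h4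
    simp only [Pi.sub_apply] at h1
    have h3' : (P[fun ω => ia' ω * Y ω | mX]) ω = μP (X ω) * πP a' (X ω) := h3.symm
    have h4' : (P[ia' | mX]) ω = πP a' (X ω) := h4.symm
    simp only [Pi.zero_apply]
    rw [h1, h3', h2, h4']
    ring
  have hI1 : (∫ ω, f ω * (ia' ω * Y ω - μP (X ω) * ia' ω) ∂P) = 0 := by
    have hfc := condExp_mul_of_stronglyMeasurable_left (μ := P) (m := mX) hfmX hint_fg hint_g
    calc (∫ ω, f ω * (ia' ω * Y ω - μP (X ω) * ia' ω) ∂P)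
        = ∫ ω, (P[fun ω => f ω * (ia' ω * Y ω - μP (X ω) * ia' ω) | mX]) ω ∂P :=
          (integral_condExp hmX).symm
      _ = ∫ ω, f ω * (P[fun ω => ia' ω * Y ω - μP (X ω) * ia' ω | mX]) ω ∂P := by
          apply integral_congr_ae
          filter_upwards [hfc] with ω hω
          exact hω
      _ = 0 := by
          rw [← integral_zero Ω ℝ (μ := P)]
          apply integral_congr_ae
          filter_upwards [hcondg] with ω hω
          simp only [Pi.zero_apply] at hω ⊢
          rw [hω, mul_zero]
  -- combine
  have hDPeq : (fun ω => DP ω)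
      = fun ω => c⁻¹ * (f ω * (ia' ω * Y ω - μP (X ω) * ia' ω) + ia ω * (μP (X ω) - θP)) := by
    funext ω
    rw [hDP ω]
    simp only [hfdef, hiadef, hia'def, hcdef]
    ring
  rw [hDPeq, integral_const_mul, integral_add hint_fg hint_iaθ, hI1, hI2]
  simp
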